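/- Let P : ℂ → ℂ be a polynomial with real coefficients such that P(λ) > 0 for all real λ. Then there exists a polynomial Q with complex coefficients, all of whose roots lie in the closed upper half-plane, such that P(λ) = Q(λ) · conj(Q(conj λ)) for all complex λ; in particular |Q(λ)|² = P(λ) for real λ. -/

import Mathlib

open Complex Polynomial

private lemma eval_map_real (P : Polynomial ℝ) (x : ℝ) :
    (P.map (algebraMap ℝ ℂ)).eval (x : ℂ) = Complex.ofReal (P.eval x) := by
  rw [eval_map, show ((x : ℂ)) = algebraMap ℝ ℂ x from rfl, eval₂_at_apply]
  rfl

private lemma conj_eval_map (P : Polynomial ℝ) (z : ℂ) :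
    (starRingEnd ℂ) ((P.map (algebraMap ℝ ℂ)).eval z)
      = (P.map (algebraMap ℝ ℂ)).eval ((starRingEnd ℂ) z) := by
  rw [eval_map, eval_map, hom_eval₂]
  congr 1
  ext x
  simp [Complex.conj_ofReal]

private lemma spectral_aux : ∀ n : ℕ, ∀ P : Polynomial ℝ, P.natDegree = n →
    (∀ x : ℝ, 0 < P.eval x) →
    ∃ Q : Polynomial ℂ,
      (∀ z : ℂ, Q.IsRoot z → 0 ≤ z.im) ∧
      (∀ z : ℂ, (P.map (algebraMap ℝ ℂ)).eval z
          = Q.eval z * (starRingEnd ℂ) (Q.eval ((starRingEnd ℂ) z))) := by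
  intro n
  induction n using Nat.strong_induction_on with
  | _ n IH =>
    intro P hdeg hpos
    have hP0 : P ≠ 0 := fun h => by simpa [h] using hpos 0
    rcases eq_or_ne n 0 with hn | hn
    · -- constant case
      have hc : P = C (P.coeff 0) := eq_C_of_natDegree_eq_zero (hdeg.trans hn)
      have hcpos : 0 < P.coeff 0 := by have := hpos 0; rwa [hc, eval_C] at this
      refine ⟨C (Real.sqrt (P.coeff 0) : ℂ), ?_, ?_⟩
      · intro z hz
        exfalso
        simp only [IsRoot, eval_C, Complex.ofReal_eq_zero] at hz
        exact (Real.sqrt_pos.mpr hcpos).ne' hz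
      · intro z
        have hmap : P.map (algebraMap ℝ ℂ) = C ((P.coeff 0 : ℝ) : ℂ) := by
          conv_lhs => rw [hc]
          simp
        rw [hmap]
        simp only [eval_C, Complex.conj_ofReal]
        rw [← Complex.ofReal_mul, Real.mul_self_sqrt hcpos.le]
    · -- P has positive degree, find a root in upper half plane
      have hdegpos : 0 < (P.map (algebraMap ℝ ℂ)).degree := by
        rw [degree_map]
        exact natDegree_pos_iff_degree_pos.mp (by omega)
      obtain ⟨z0, hz0⟩ := Complex.exists_root hdegpos
      have him0 : z0.im ≠ 0 := by
        intro h
        have hre : z0 = (z0.re : ℂ) := Complex.ext rfl (by simp [h])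
        have h2 := hz0
        rw [IsRoot, hre, eval_map_real] at h2
        exact (hpos z0.re).ne' (by exact_mod_cast h2)
      -- choose root with positive imaginary part
      obtain ⟨z, hzr, hzim⟩ : ∃ z : ℂ, (P.map (algebraMap ℝ ℂ)).IsRoot z ∧ 0 < z.im := by
        rcases lt_or_gt_of_ne him0 with h | h
        · refine ⟨(starRingEnd ℂ) z0, ?_, by simpa using h⟩
          have := conj_eval_map P z0
          rw [hz0] at this
          simpa [IsRoot] using this.symm
        · exact ⟨z0, hz0, h⟩
      -- the real quadratic factor
      set q : Polynomial ℝ := (X - C z.re) ^ 2 + C (z.im ^ 2) with hq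
      have hlt : degree (C (z.im ^ 2)) < degree ((X - C z.re) ^ 2) := by
        rw [degree_pow, degree_X_sub_C]
        exact lt_of_le_of_lt degree_C_le (by decide)
      have hqmonic : q.Monic :=
        Polynomial.Monic.add_of_left ((monic_X_sub_C z.re).pow 2) hlt
      have hqfac : q.map (algebraMap ℝ ℂ)
          = (X - C z) * (X - C ((starRingEnd ℂ) z)) := by
        have hI : (C I : Polynomial ℂ) ^ 2 = -1 := by
          rw [← C_pow, Complex.I_sq]; simp
        have hcz : (C z : Polynomial ℂ) = C (z.re : ℂ) + C (z.im : ℂ) * C I := by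
          rw [← C_mul, ← C_add]
          congr 1
          simp [Complex.re_add_im]
        have hczb : (C ((starRingEnd ℂ) z) : Polynomial ℂ)
            = C (z.re : ℂ) - C (z.im : ℂ) * C I := by
          rw [← C_mul, ← C_sub]
          congr 1
          rw [Complex.ext_iff]
          simp
        rw [hq]
        simp only [Polynomial.map_add, Polynomial.map_pow, Polynomial.map_sub,
          map_C, Polynomial.map_X, Complex.coe_algebraMap]
        rw [Complex.ofReal_pow, C_pow, hcz, hczb]
        linear_combination ((C (z.im : ℂ)) ^ 2) * hI
      have hqdvd : q ∣ P := by
        rw [← map_dvd_map (algebraMap ℝ ℂ) (algebraMap ℝ ℂ).injective hqmonic]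
        rw [hqfac]
        apply IsCoprime.mul_dvd
        · apply isCoprime_X_sub_C_of_isUnit_sub
          apply IsUnit.mk0
          rw [sub_ne_zero]
          intro h
          have h2 := congrArg Complex.im h
          simp at h2
          exact hzim.ne' (by linarith)
        · rw [dvd_iff_isRoot]; exact hzr
        · rw [dvd_iff_isRoot, IsRoot, ← conj_eval_map, hzr]
          simp
      obtain ⟨P', hP'⟩ := hqdvd
      have hP'0 : P' ≠ 0 := fun h => hP0 (by rw [hP', h, mul_zero])
      have hq0 : q ≠ 0 := hqmonic.ne_zero
      have hdq : q.degree = 2 := by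
        rw [hq, degree_add_eq_left_of_degree_lt hlt, degree_pow, degree_X_sub_C]
        rfl
      have hqdeg : q.natDegree = 2 := natDegree_eq_of_degree_eq_some hdq
      have hqevalpos : ∀ x : ℝ, 0 < q.eval x := by
        intro x
        rw [hq]
        simp only [eval_add, eval_pow, eval_sub, eval_X, eval_C]
        have h2 : (0:ℝ) < z.im ^ 2 := by positivity
        positivity
      have hP'pos : ∀ x : ℝ, 0 < P'.eval x := by
        intro x
        have h1 := hpos x
        rw [hP', eval_mul] at h1
        rcases mul_pos_iff.mp h1 with ⟨_, h⟩ | ⟨h, _⟩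
        · exact h
        · exact absurd (hqevalpos x) (by linarith)
      have hdeg' : P'.natDegree < n := by
        have := natDegree_mul hq0 hP'0
        rw [← hP', hdeg, hqdeg] at this
        omega
      obtain ⟨Q', hQ'root, hQ'eval⟩ := IH P'.natDegree hdeg' P' rfl hP'pos
      refine ⟨(X - C z) * Q', ?_, ?_⟩
      · intro w hw
        simp only [IsRoot, eval_mul, eval_sub, eval_X, eval_C, mul_eq_zero,
          sub_eq_zero] at hw
        rcases hw with h | h
        · rw [h]; exact hzim.le
        · exact hQ'root w h
      · intro w
        have hmap : P.map (algebraMap ℝ ℂ)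
            = (q.map (algebraMap ℝ ℂ)) * (P'.map (algebraMap ℝ ℂ)) := by
          rw [hP', Polynomial.map_mul]
        rw [hmap, eval_mul, hqfac, hQ'eval w]
        simp only [eval_mul, eval_sub, eval_X, eval_C, map_mul, map_sub]
        rw [Complex.conj_conj]
        ring

theorem spectral_factorization (P : Polynomial ℝ) (hpos : ∀ x : ℝ, 0 < P.eval x) :
    ∃ Q : Polynomial ℂ,
      (∀ z : ℂ, Q.IsRoot z → 0 ≤ z.im) ∧
      (∀ z : ℂ, (P.map (algebraMap ℝ ℂ)).eval z
          = Q.eval z * (starRingEnd ℂ) (Q.eval ((starRingEnd ℂ) z))) ∧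
      (∀ x : ℝ, ‖Q.eval (x : ℂ)‖ ^ 2 = P.eval x) := by
  obtain ⟨Q, h1, h2⟩ := spectral_aux P.natDegree P rfl hpos
  refine ⟨Q, h1, h2, fun x => ?_⟩
  have h := h2 (x : ℂ)
  rw [Complex.conj_ofReal, Complex.mul_conj, eval_map_real] at h
  rw [Complex.sq_norm]
  exact_mod_cast h.symm
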